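/- arXiv:0907.5527 — 3 statements merged into one kernel-verified Lean document; each statement's English description precedes it below -/
import Mathlib

section
/- Let F be a signature with arities bounded by A and containing at least one constant, ≻ a precedence on F whose rank function is everywhere finite, and (w, w₀) an admissible weight function for ≻; let ≻kbo be the induced Knuth–Bendix order and tw the associated sequence encoding with b := max(A,3)+1. Then tw is well defined (the unpadded length of the encoding of any term t is at most b^{weight(t)+1}) and tw embeds ≻kbo into >lex: for all terms s, t ∈ T(F,V), s ≻kbo t implies tw(s) >lex tw(t). -/
/-- First-order terms over a signature `F` (with arity function `ar`) and variables `V`. -/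
inductive Tm (F : Type) (ar : F → ℕ) (V : Type) : Type where
  | var : V → Tm F ar V
  | fn : (f : F) → (Fin (ar f) → Tm F ar V) → Tm F ar V

namespace Tm

variable {F : Type} {ar : F → ℕ} {V : Type}

/-- The size of a term: the number of occurrences of variables and function symbols. -/
def size : Tm F ar V → ℕ
  | var _ => 1
  | fn _ ts => 1 + ∑ i, (ts i).size

/-- Number of occurrences of the variable `x` in a term. -/
def count [DecidableEq V] (x : V) : Tm F ar V → ℕ
  | var y => if y = x then 1 else 0
  | fn _ ts => ∑ i, (ts i).count x

/-- The weight of a term with respect to a weight function `(w, w₀)`. -/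
def weight (w : F → ℕ) (w0 : ℕ) : Tm F ar V → ℕ
  | var _ => w0
  | fn f ts => w f + ∑ i, weight w w0 (ts i)

/-- `f` is the special symbol: a unary symbol of weight `0`. -/
def IsSpec (ar : F → ℕ) (w : F → ℕ) (f : F) : Prop := ar f = 1 ∧ w f = 0

/-- Stripping all leading occurrences of the special symbol: if `t = ∘^a t'` where the
root of `t'` is not special, then `core t = t'`. -/
def core (w : F → ℕ) : Tm F ar V → Tm F ar V
  | var x => var x
  | fn f ts =>
      if h : ar f = 1 ∧ w f = 0 then core w (ts ⟨0, by omega⟩) else fn f ts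

/-- The number of leading occurrences of the special symbol: if `t = ∘^a t'` where the
root of `t'` is not special, then `specCount t = a`. -/
def specCount (w : F → ℕ) : Tm F ar V → ℕ
  | var _ => 0
  | fn f ts =>
      if h : ar f = 1 ∧ w f = 0 then specCount w (ts ⟨0, by omega⟩) + 1 else 0

end Tm

/-- The Knuth–Bendix order induced by a precedence `prec` and a weight function
`(w, w0)`:  `s ≻kbo t` iff every variable occurs at least as often in `s` as in `t`
and either the weight of `s` is larger, or the weights are equal, `s = ∘^a g(s₁,…,sₙ)`,
`t = ∘^b h(t₁,…,tₘ)` and either `a > b`, or `a = b` and `g ≻ h`, or `a = b`, `g = h`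
and `(s₁,…,sₙ)` is lexicographically larger than `(t₁,…,tₙ)`. -/
inductive Kbo {F : Type} {ar : F → ℕ} {V : Type} [DecidableEq V]
    (prec : F → F → Prop) (w : F → ℕ) (w0 : ℕ) : Tm F ar V → Tm F ar V → Prop
  | wt {s t} : (∀ x, Tm.count x t ≤ Tm.count x s) →
      Tm.weight w w0 t < Tm.weight w w0 s → Kbo prec w w0 s t
  | spec {s t g ss h ts} : (∀ x, Tm.count x t ≤ Tm.count x s) →
      Tm.weight w w0 s = Tm.weight w w0 t →
      Tm.core w s = Tm.fn g ss → Tm.core w t = Tm.fn h ts →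
      Tm.specCount w t < Tm.specCount w s → Kbo prec w w0 s t
  | prec {s t g ss h ts} : (∀ x, Tm.count x t ≤ Tm.count x s) →
      Tm.weight w w0 s = Tm.weight w w0 t →
      Tm.core w s = Tm.fn g ss → Tm.core w t = Tm.fn h ts →
      Tm.specCount w s = Tm.specCount w t → prec g h → Kbo prec w w0 s t
  | lex {s t g ss ts} : (∀ x, Tm.count x t ≤ Tm.count x s) →
      Tm.weight w w0 s = Tm.weight w w0 t →
      Tm.core w s = Tm.fn g ss → Tm.core w t = Tm.fn g ts →
      Tm.specCount w s = Tm.specCount w t →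
      ∀ i : Fin (ar g), (∀ j, j < i → ss j = ts j) → Kbo prec w w0 (ss i) (ts i) →
      Kbo prec w w0 s t

/-- Pad a sequence with zeros up to length `n`. -/
def pad (l : List ℕ) (n : ℕ) : List ℕ := l ++ List.replicate (n - l.length) 0

/-- Increment the second entry of a sequence (used to record one more leading special
symbol in the encoding `tw`). -/
def bump : List ℕ → List ℕ
  | wv :: a :: rest => wv :: (a + 1) :: rest
  | l => l

namespace Tm

variable {F : Type} {ar : F → ℕ} {V : Type}

/-- The sequence encoding `tw`:  `tw (∘^a x) = (w₀, a, 0)·0^m` for a variable `x` and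
`tw (∘^a g(t₁,…,tₙ)) = (weight t, a, rk g)·tw t₁·⋯·tw tₙ·0^m`, padded with zeros so
that the result has length exactly `b^{weight t + 1}`. -/
def tw (w : F → ℕ) (w0 b : ℕ) (rk : F → ℕ) : Tm F ar V → List ℕ
  | var _ => pad [w0, 0, 0] (b ^ (w0 + 1))
  | fn f ts =>
      if h : ar f = 1 ∧ w f = 0 then
        bump (tw w w0 b rk (ts ⟨0, by omega⟩))
      else
        pad (Tm.weight w w0 (fn f ts) :: 0 :: rk f ::
              (List.ofFn fun i => tw w w0 b rk (ts i)).flatten)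
          (b ^ (Tm.weight w w0 (fn f ts) + 1))

end Tm

/-- `lexGt p q` iff `|p| > |q|`, or `|p| = |q|` and there is an index `i` with
`(p)_j = (q)_j` for all `j < i` and `(p)_i > (q)_i`. -/
def lexGt (p q : List ℕ) : Prop :=
  q.length < p.length ∨
    (p.length = q.length ∧
      ∃ i < p.length, (∀ j < i, p.getD j 0 = q.getD j 0) ∧ q.getD i 0 < p.getD i 0)

section AuxLemmas

variable {F : Type} {ar : F → ℕ} {V : Type}

lemma sum_fin_eq_single {n : ℕ} (h : n = 1) (g : Fin n → ℕ) :
    ∑ i, g i = g ⟨0, by omega⟩ := by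
  subst h; exact Fin.sum_univ_one g

lemma pad_length {l : List ℕ} {n : ℕ} (h : l.length ≤ n) : (pad l n).length = n := by
  simp [pad]; omega

lemma pad_getD (l : List ℕ) (n j : ℕ) (hj : j < l.length) :
    (pad l n).getD j 0 = l.getD j 0 := by
  simp only [pad]; exact List.getD_append _ _ _ _ hj

lemma bump_length (l : List ℕ) : (bump l).length = l.length := by
  unfold bump; split <;> simp

lemma bump_pad (x y : ℕ) (l : List ℕ) (n : ℕ) :
    bump (pad (x :: y :: l) n) = pad (x :: (y+1) :: l) n := by
  simp [pad, bump]

lemma weight_ge (w : F → ℕ) (w0 : ℕ) (hwc : ∀ c, ar c = 0 → w0 ≤ w c)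
    (t : Tm F ar V) : w0 ≤ Tm.weight w w0 t := by
  induction t with
  | var x => simp [Tm.weight]
  | fn f ts ih =>
    simp only [Tm.weight]
    rcases Nat.eq_zero_or_pos (ar f) with h | h
    · have := hwc f h; omega
    · have h1 : Tm.weight w w0 (ts ⟨0, h⟩) ≤ ∑ i, Tm.weight w w0 (ts i) :=
        Finset.single_le_sum (f := fun i => Tm.weight w w0 (ts i))
          (fun i _ => Nat.zero_le _) (Finset.mem_univ _)
      have h2 := ih ⟨0, h⟩
      omega

lemma weight_spec {w : F → ℕ} {w0 : ℕ} {f : F} (h : ar f = 1 ∧ w f = 0)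
    (ts : Fin (ar f) → Tm F ar V) :
    Tm.weight w w0 (Tm.fn f ts) = Tm.weight w w0 (ts ⟨0, by omega⟩) := by
  simp [Tm.weight, h.2, sum_fin_eq_single h.1]

lemma tw_core_var (w : F → ℕ) (w0 b : ℕ) (rk : F → ℕ) (t : Tm F ar V) (x : V)
    (h : Tm.core w t = Tm.var x) :
    Tm.weight w w0 t = w0 ∧
      Tm.tw w w0 b rk t = pad [w0, Tm.specCount w t, 0] (b ^ (w0 + 1)) := by
  induction t with
  | var y => simp [Tm.tw, Tm.specCount, Tm.weight]
  | fn f ts ih =>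
    simp only [Tm.core] at h
    by_cases hs : ar f = 1 ∧ w f = 0
    · rw [dif_pos hs] at h
      obtain ⟨hw, htw⟩ := ih _ h
      have hwf : Tm.weight w w0 (Tm.fn f ts) = w0 := by rw [weight_spec hs, hw]
      refine ⟨hwf, ?_⟩
      simp only [Tm.tw, Tm.specCount, dif_pos hs]
      rw [htw]
      exact bump_pad w0 _ [0] _
    · rw [dif_neg hs] at h; exact absurd h (by simp)

lemma tw_core_fn (w : F → ℕ) (w0 b : ℕ) (rk : F → ℕ) (t : Tm F ar V)
    (g : F) (ss : Fin (ar g) → Tm F ar V)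
    (h : Tm.core w t = Tm.fn g ss) :
    Tm.tw w w0 b rk t = pad (Tm.weight w w0 t :: Tm.specCount w t :: rk g ::
        (List.ofFn fun i => Tm.tw w w0 b rk (ss i)).flatten)
      (b ^ (Tm.weight w w0 t + 1)) := by
  induction t with
  | var y => simp [Tm.core] at h
  | fn f ts ih =>
    simp only [Tm.core] at h
    by_cases hs : ar f = 1 ∧ w f = 0
    · rw [dif_pos hs] at h
      have htw := ih _ h
      simp only [Tm.tw, Tm.specCount, dif_pos hs]
      rw [htw, weight_spec (w0 := w0) hs]
      exact bump_pad _ _ _ _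
    · rw [dif_neg hs] at h
      injection h with h1 h2
      subst h1
      have h2' : ts = ss := eq_of_heq h2
      subst h2'
      simp only [Tm.tw, Tm.specCount, dif_neg hs]

lemma arith_bound (n A b wf : ℕ) (wi : Fin n → ℕ) (hA : n ≤ A) (hb : b = max A 3 + 1)
    (hwi : ∀ i, 1 ≤ wi i) (hns : ¬(n = 1 ∧ wf = 0)) (hW1 : 1 ≤ wf + ∑ i, wi i) :
    3 + ∑ i, b ^ (wi i + 1) ≤ b ^ (wf + ∑ i, wi i + 1) := by
  have hb4 : 4 ≤ b := by omega
  set W := wf + ∑ i, wi i with hW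
  have hbW : b ≤ b ^ W := by
    calc b = b ^ 1 := (pow_one b).symm
    _ ≤ b ^ W := Nat.pow_le_pow_right (by omega) hW1
  have key : ∀ i : Fin n, wi i + 1 ≤ W := by
    intro i
    have h1 : wi i + (Finset.univ.erase i).card ≤ ∑ j, wi j := by
      have h2 : (Finset.univ.erase i).card • 1 ≤ ∑ j ∈ Finset.univ.erase i, wi j :=
        Finset.card_nsmul_le_sum _ _ _ (fun j _ => hwi j)
      have h3 := Finset.add_sum_erase Finset.univ wi (Finset.mem_univ i)
      simp only [smul_eq_mul, mul_one] at h2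
      omega
    have hcard : (Finset.univ.erase i).card = n - 1 := by
      rw [Finset.card_erase_of_mem (Finset.mem_univ i)]
      simp
    have hn1 : 1 ≤ n := by
      rcases Nat.eq_zero_or_pos n with h | h
      · exact absurd i.2 (by omega)
      · exact h
    rw [hcard] at h1
    rcases Nat.eq_zero_or_pos wf with hwf | hwf
    · have : 2 ≤ n := by omega
      omega
    · omega
  have hsum : ∑ i, b ^ (wi i + 1) ≤ n * b ^ W := by
    calc ∑ i, b ^ (wi i + 1) ≤ ∑ _i : Fin n, b ^ W :=
          Finset.sum_le_sum (fun i _ => Nat.pow_le_pow_right (by omega) (key i))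
    _ = n * b ^ W := by simp [Finset.sum_const, mul_comm]
  calc 3 + ∑ i, b ^ (wi i + 1) ≤ b ^ W + n * b ^ W := by omega
  _ ≤ b ^ W + (b - 1) * b ^ W := by
      have : n ≤ b - 1 := by omega
      exact Nat.add_le_add_left (Nat.mul_le_mul_right _ this) _
  _ = b * b ^ W := by
      have hW' : ((b - 1) + 1) * b ^ W = b ^ W + (b - 1) * b ^ W := by
        rw [Nat.add_mul, one_mul]; omega
      rw [← hW', Nat.sub_add_cancel (by omega)]
  _ = b ^ (W + 1) := by rw [pow_succ, mul_comm]

lemma tw_length (w : F → ℕ) (w0 : ℕ) (hw0 : 0 < w0) (hwc : ∀ c, ar c = 0 → w0 ≤ w c)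
    (A : ℕ) (hA : ∀ f, ar f ≤ A) (b : ℕ) (hb : b = max A 3 + 1) (rk : F → ℕ)
    (t : Tm F ar V) :
    (Tm.tw w w0 b rk t).length = b ^ (Tm.weight w w0 t + 1) := by
  have hb4 : 4 ≤ b := by omega
  induction t with
  | var x =>
    simp only [Tm.tw, Tm.weight]
    apply pad_length
    calc ([w0, 0, 0] : List ℕ).length = 3 := rfl
    _ ≤ b ^ 1 := by rw [pow_one]; omega
    _ ≤ b ^ (w0 + 1) := Nat.pow_le_pow_right (by omega) (by omega)
  | fn f ts ih =>
    simp only [Tm.tw]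
    by_cases hs : ar f = 1 ∧ w f = 0
    · rw [dif_pos hs, bump_length, ih, weight_spec (w0 := w0) hs]
    · rw [dif_neg hs]
      apply pad_length
      have hflat : (List.ofFn fun i => Tm.tw w w0 b rk (ts i)).flatten.length
          = ∑ i, b ^ (Tm.weight w w0 (ts i) + 1) := by
        rw [List.length_flatten, List.map_ofFn, List.sum_ofFn]
        refine Finset.sum_congr rfl (fun i _ => ?_)
        exact ih i
      simp only [List.length_cons, hflat]
      have harith := arith_bound (ar f) A b (w f) (fun i => Tm.weight w w0 (ts i))
        (hA f) hb (fun i => le_trans hw0 (weight_ge w w0 hwc (ts i)))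
        (by push_neg; intro h1 h2; exact hs ⟨h1, h2⟩) ?_
      · simp only [Tm.weight]
        omega
      · rcases Nat.eq_zero_or_pos (ar f) with h | h
        · have := hwc f h; omega
        · have h1 : Tm.weight w w0 (ts ⟨0, h⟩) ≤ ∑ i, Tm.weight w w0 (ts i) :=
            Finset.single_le_sum (f := fun i => Tm.weight w w0 (ts i))
              (fun i _ => Nat.zero_le _) (Finset.mem_univ _)
          have h2 := weight_ge w w0 hwc (ts ⟨0, h⟩)
          omega

lemma kbo_weight_ge [DecidableEq V] {prec : F → F → Prop} {w : F → ℕ} {w0 : ℕ}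
    {s t : Tm F ar V} (h : Kbo prec w w0 s t) :
    Tm.weight w w0 t ≤ Tm.weight w w0 s := by
  cases h with
  | wt _ h => omega
  | spec _ h _ _ _ => omega
  | prec _ h _ _ _ _ => omega
  | lex _ h _ _ _ _ _ _ => omega

lemma lexGt_of_blocks (c u v x y : List ℕ)
    (hlen : (c ++ (u ++ x)).length = (c ++ (v ++ y)).length)
    (k : ℕ) (hku : k < u.length) (hkv : k < v.length)
    (hj : ∀ j < k, u.getD j 0 = v.getD j 0) (hk : v.getD k 0 < u.getD k 0) :
    lexGt (c ++ (u ++ x)) (c ++ (v ++ y)) := by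
  right
  refine ⟨hlen, c.length + k, ?_, ?_, ?_⟩
  · simp only [List.length_append]; omega
  · intro j hjlt
    rcases Nat.lt_or_ge j c.length with hc | hc
    · rw [List.getD_append c (u ++ x) 0 j hc, List.getD_append c (v ++ y) 0 j hc]
    · have hj' : j - c.length < k := by omega
      rw [List.getD_append_right c (u ++ x) 0 j hc,
          List.getD_append_right c (v ++ y) 0 j hc,
          List.getD_append u x 0 _ (by omega),
          List.getD_append v y 0 _ (by omega)]
      exact hj _ hj'
  · rw [List.getD_append_right c (u ++ x) 0 _ (by omega),
        List.getD_append_right c (v ++ y) 0 _ (by omega),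
        Nat.add_sub_cancel_left,
        List.getD_append u x 0 k hku, List.getD_append v y 0 k hkv]
    exact hk

lemma ofFn_take_eq {n m : ℕ} (f : Fin n → List ℕ) (g : Fin m → List ℕ) (i : ℕ)
    (hin : i ≤ n) (him : i ≤ m)
    (h : ∀ j (hj : j < i), f ⟨j, by omega⟩ = g ⟨j, by omega⟩) :
    (List.ofFn f).take i = (List.ofFn g).take i := by
  apply List.ext_getElem
  · simp; omega
  · intro j h1 h2
    simp only [List.getElem_take, List.getElem_ofFn]
    have h1' : j < i ∧ j < n := by simpa using h1
    exact h j h1'.1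

lemma tw_getD0 (w : F → ℕ) (w0 b : ℕ) (rk : F → ℕ) (t : Tm F ar V) :
    (Tm.tw w w0 b rk t).getD 0 0 = Tm.weight w w0 t := by
  rcases hc : Tm.core w t with x | ⟨g, ss⟩
  · obtain ⟨hw, htw⟩ := tw_core_var w w0 b rk t x hc
    rw [htw, pad_getD _ _ 0 (by simp), hw]
    rfl
  · rw [tw_core_fn w w0 b rk t g ss hc, pad_getD _ _ 0 (by simp)]
    rfl

end AuxLemmas

/-- Let `F` be a signature with arities bounded by `A` containing a
constant, `prec` a precedence whose rank function `rk` is everywhere finite, `(w, w0)`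
an admissible weight function, and `b = max(A,3)+1`.  Then the encoding `tw` is well
defined (every encoding has the prescribed length `b^{weight(t)+1}`), and `tw` embeds
`≻kbo` into `>lex`. -/
theorem kbo_embeds_into_lex {F : Type} {ar : F → ℕ} {V : Type} [DecidableEq V]
    (A : ℕ) (hA : ∀ f, ar f ≤ A) (hconst : ∃ c, ar c = 0)
    (prec : F → F → Prop)
    (hirr : ∀ f, ¬ prec f f)
    (htrans : ∀ f g h, prec f g → prec g h → prec f h)
    (rk : F → ℕ)
    (hrk₁ : ∀ f g, prec f g → rk g < rk f)
    (hrk₂ : ∀ f, rk f = 0 ∨ ∃ g, prec f g ∧ rk f = rk g + 1)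
    (w : F → ℕ) (w0 : ℕ) (hw0 : 0 < w0)
    (hwc : ∀ c, ar c = 0 → w0 ≤ w c)
    (hadm : ∀ f, ar f = 1 → w f = 0 → ∀ g, g ≠ f → prec f g)
    (b : ℕ) (hb : b = max A 3 + 1) :
    (∀ t : Tm F ar V, (Tm.tw w w0 b rk t).length = b ^ (Tm.weight w w0 t + 1)) ∧
    (∀ s t : Tm F ar V, Kbo prec w w0 s t →
      lexGt (Tm.tw w w0 b rk s) (Tm.tw w w0 b rk t)) := by
  have hlen : ∀ t : Tm F ar V, (Tm.tw w w0 b rk t).length = b ^ (Tm.weight w w0 t + 1) :=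
    tw_length w w0 hw0 hwc A hA b hb rk
  refine ⟨hlen, fun s t hkbo => ?_⟩
  have hb4 : 4 ≤ b := by omega
  have hpow : ∀ n : ℕ, 4 ≤ b ^ (n + 1) := by
    intro n
    calc (4:ℕ) ≤ b := hb4
    _ = b ^ 1 := (pow_one b).symm
    _ ≤ b ^ (n+1) := Nat.pow_le_pow_right (by omega) (by omega)
  induction hkbo with
  | @wt s t hcnt hwt =>
    left; rw [hlen, hlen]
    exact Nat.pow_lt_pow_right (by omega) (by omega)
  | @spec s t g ss h ts hcnt hweq hcs hct hsc =>
    right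
    refine ⟨by rw [hlen, hlen, hweq], 1,
      by rw [hlen]; have := hpow (Tm.weight w w0 s); omega, ?_, ?_⟩
    · intro j hj
      interval_cases j
      rw [tw_core_fn w w0 b rk s g ss hcs, tw_core_fn w w0 b rk t h ts hct,
          pad_getD _ _ 0 (by simp), pad_getD _ _ 0 (by simp)]
      simpa using hweq
    · rw [tw_core_fn w w0 b rk s g ss hcs, tw_core_fn w w0 b rk t h ts hct,
          pad_getD _ _ 1 (by simp), pad_getD _ _ 1 (by simp)]
      simpa using hsc
  | @prec s t g ss h ts hcnt hweq hcs hct hsc hp =>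
    right
    refine ⟨by rw [hlen, hlen, hweq], 2,
      by rw [hlen]; have := hpow (Tm.weight w w0 s); omega, ?_, ?_⟩
    · intro j hj
      interval_cases j
      · rw [tw_core_fn w w0 b rk s g ss hcs, tw_core_fn w w0 b rk t h ts hct,
            pad_getD _ _ 0 (by simp), pad_getD _ _ 0 (by simp)]
        simpa using hweq
      · rw [tw_core_fn w w0 b rk s g ss hcs, tw_core_fn w w0 b rk t h ts hct,
            pad_getD _ _ 1 (by simp), pad_getD _ _ 1 (by simp)]
        simpa using hsc
    · rw [tw_core_fn w w0 b rk s g ss hcs, tw_core_fn w w0 b rk t h ts hct,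
          pad_getD _ _ 2 (by simp), pad_getD _ _ 2 (by simp)]
      simpa using hrk₁ g h hp
  | @lex s t g ss ts hcnt hweq hcs hct hsc i hpre hk ih =>
    have htws := tw_core_fn w w0 b rk s g ss hcs
    have htwt := tw_core_fn w w0 b rk t g ts hct
    rw [← hweq, ← hsc] at htwt
    set ls : List (List ℕ) := List.ofFn fun j => Tm.tw w w0 b rk (ss j) with hls
    set lt : List (List ℕ) := List.ofFn fun j => Tm.tw w w0 b rk (ts j) with hlt
    have hils : (i : ℕ) < ls.length := by simp [hls]
    have hilt : (i : ℕ) < lt.length := by simp [hlt]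
    have hsplit_s : ls.flatten = (ls.take ↑i).flatten ++
        (Tm.tw w w0 b rk (ss i) ++ (ls.drop (↑i+1)).flatten) := by
      conv_lhs => rw [← List.take_append_drop ↑i ls]
      rw [List.flatten_append, List.drop_eq_getElem_cons hils, List.flatten_cons]
      simp [hls]
    have hsplit_t : lt.flatten = (lt.take ↑i).flatten ++
        (Tm.tw w w0 b rk (ts i) ++ (lt.drop (↑i+1)).flatten) := by
      conv_lhs => rw [← List.take_append_drop ↑i lt]
      rw [List.flatten_append, List.drop_eq_getElem_cons hilt, List.flatten_cons]
      simp [hlt]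
    have htake : ls.take ↑i = lt.take ↑i := by
      apply ofFn_take_eq _ _ ↑i i.2.le i.2.le
      intro j hj
      have hj2 : j < ar g := Nat.lt_trans hj i.2
      exact congrArg _ (hpre ⟨j, hj2⟩ hj)
    have hdecomp_s : Tm.tw w w0 b rk s =
        (Tm.weight w w0 s :: Tm.specCount w s :: rk g :: (ls.take ↑i).flatten) ++
          (Tm.tw w w0 b rk (ss i) ++ ((ls.drop (↑i+1)).flatten ++
            List.replicate (b ^ (Tm.weight w w0 s + 1) -
              (Tm.weight w w0 s :: Tm.specCount w s :: rk g :: ls.flatten).length) 0)) := by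
      rw [htws]
      simp only [pad]
      rw [hsplit_s]
      simp [List.append_assoc]
    have hdecomp_t : Tm.tw w w0 b rk t =
        (Tm.weight w w0 s :: Tm.specCount w s :: rk g :: (ls.take ↑i).flatten) ++
          (Tm.tw w w0 b rk (ts i) ++ ((lt.drop (↑i+1)).flatten ++
            List.replicate (b ^ (Tm.weight w w0 s + 1) -
              (Tm.weight w w0 s :: Tm.specCount w s :: rk g :: lt.flatten).length) 0)) := by
      rw [htwt, htake]
      simp only [pad]
      rw [hsplit_t]
      simp [List.append_assoc]
    obtain ⟨k, hku, hkv, hjs, hklt⟩ :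
        ∃ k, k < (Tm.tw w w0 b rk (ss i)).length ∧ k < (Tm.tw w w0 b rk (ts i)).length ∧
          (∀ j < k, (Tm.tw w w0 b rk (ss i)).getD j 0 = (Tm.tw w w0 b rk (ts i)).getD j 0) ∧
          (Tm.tw w w0 b rk (ts i)).getD k 0 < (Tm.tw w w0 b rk (ss i)).getD k 0 := by
      have hwge := kbo_weight_ge hk
      rcases Nat.lt_or_ge (Tm.weight w w0 (ts i)) (Tm.weight w w0 (ss i)) with hlt2 | hge2
      · refine ⟨0, ?_, ?_, by omega, ?_⟩
        · rw [hlen]; have := hpow (Tm.weight w w0 (ss i)); omega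
        · rw [hlen]; have := hpow (Tm.weight w w0 (ts i)); omega
        · rw [tw_getD0, tw_getD0]; exact hlt2
      · have heq2 : Tm.weight w w0 (ss i) = Tm.weight w w0 (ts i) := by omega
        rcases ih with hbad | ⟨_, k, hk1, hk2, hk3⟩
        · rw [hlen, hlen, heq2] at hbad; omega
        · exact ⟨k, hk1, by rw [hlen, ← heq2, ← hlen]; exact hk1, hk2, hk3⟩
    rw [hdecomp_s, hdecomp_t]
    exact lexGt_of_blocks _ _ _ _ _
      (by rw [← hdecomp_s, ← hdecomp_t, hlen, hlen, hweq]) k hku hkv hjs hklt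
end

section
/- Let C be a Δ-linear interpretation for a finite signature F and let K be the maximum of all coefficients a_{f,i}, b_{f,i}, c_f, d_f occurring in C. Then for every ground term t over F and every real Δ > 0, [t]_Δ ≤ (K+2)^{|t|}·(Δ + 1). -/
/-- A Δ-linear interpretation for a signature `F` with arity function `ar`. -/
structure DeltaLin (F : Type) (ar : F → ℕ) where
  a : (f : F) → Fin (ar f) → ℕ
  b : (f : F) → Fin (ar f) → ℕ
  c : F → ℕ
  d : F → ℕ
  pos : ∀ f i, 1 ≤ a f i + b f i

namespace DeltaLin

variable {F : Type} {ar : F → ℕ}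

/-- The interpretation function
`f[Δ](z₁,…,zₙ) = Σᵢ a_{f,i}·zᵢ + Σᵢ b_{f,i}·zᵢ·Δ + c_f·Δ + d_f`. -/
noncomputable def fA (C : DeltaLin F ar) (f : F) (Δ : ℝ) (z : Fin (ar f) → ℝ) : ℝ :=
  (∑ i, (C.a f i : ℝ) * z i) + (∑ i, (C.b f i : ℝ) * z i * Δ) +
    (C.c f : ℝ) * Δ + (C.d f : ℝ)

/-- The parameter function `f^i(Δ) = Δ/(a_{f,i} + b_{f,i}·Δ)`. -/
noncomputable def par (C : DeltaLin F ar) (f : F) (i : Fin (ar f)) (Δ : ℝ) : ℝ :=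
  Δ / ((C.a f i : ℝ) + (C.b f i : ℝ) * Δ)

/-- Context-dependent evaluation of ground terms:
`[f(t₁,…,tₙ)]_Δ = f[Δ]([t₁]_{f¹(Δ)},…,[tₙ]_{fⁿ(Δ)})`. -/
noncomputable def evalG (C : DeltaLin F ar) : Tm F ar Empty → ℝ → ℝ
  | .var x, _ => x.elim
  | .fn f ts, Δ => C.fA f Δ fun i => evalG C (ts i) (C.par f i Δ)

end DeltaLin

lemma sum_pow_le {ι : Type*} (s : Finset ι) (x : ℝ) (hx : 2 ≤ x)
    (e : ι → ℕ) (he : ∀ i, 1 ≤ e i) :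
    ∑ i ∈ s, x ^ e i ≤ x ^ (∑ i ∈ s, e i) := by
  induction s using Finset.cons_induction with
  | empty => simp
  | cons a s ha ih =>
    rw [Finset.sum_cons, Finset.sum_cons]
    rcases s.eq_empty_or_nonempty with h | h
    · simp [h]
    · have h1 : x ^ e a ≥ x := by
        calc x = x ^ 1 := (pow_one x).symm
        _ ≤ x ^ e a := pow_le_pow_right₀ (by linarith) (he a)
      have h2 : x ^ (∑ i ∈ s, e i) ≥ x := by
        calc x = x ^ 1 := (pow_one x).symm
        _ ≤ x ^ (∑ i ∈ s, e i) := pow_le_pow_right₀ (by linarith)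
            (le_trans (he h.choose) (Finset.single_le_sum (f := e)
              (fun i _ => Nat.zero_le _) h.choose_spec))
      calc x ^ e a + ∑ i ∈ s, x ^ e i ≤ x ^ e a + x ^ (∑ i ∈ s, e i) := by linarith
      _ ≤ x ^ e a * x ^ (∑ i ∈ s, e i) := by nlinarith
      _ = x ^ (e a + ∑ i ∈ s, e i) := (pow_add x _ _).symm

lemma size_pos' {F : Type} {ar : F → ℕ} {V : Type} (t : Tm F ar V) : 1 ≤ t.size := by
  cases t <;> simp [Tm.size]

/-- For a Δ-linear interpretation `C` over a finite signature, with
`K` the maximum of all coefficients `a_{f,i}, b_{f,i}, c_f, d_f`, every ground term `t`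
and every `Δ > 0` satisfy `[t]_Δ ≤ (K+2)^{|t|}·(Δ + 1)`. -/
theorem deltaLin_eval_bound {F : Type} [Fintype F] {ar : F → ℕ}
    (C : DeltaLin F ar) (K : ℕ)
    (hK : K = (Finset.univ.sup fun f => Finset.univ.sup fun i => C.a f i) ⊔
              (Finset.univ.sup fun f => Finset.univ.sup fun i => C.b f i) ⊔
              (Finset.univ.sup C.c) ⊔ (Finset.univ.sup C.d)) :
    ∀ (t : Tm F ar Empty) (Δ : ℝ), 0 < Δ →
      C.evalG t Δ ≤ ((K : ℝ) + 2) ^ (Tm.size t) * (Δ + 1) := by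
  have hK0 : (0:ℝ) ≤ (K:ℝ) := Nat.cast_nonneg K
  have haK : ∀ f i, (C.a f i : ℝ) ≤ K := by
    intro f i
    have : C.a f i ≤ K := by
      rw [hK]
      exact le_sup_of_le_left (le_sup_of_le_left (le_sup_of_le_left
        (le_trans (Finset.le_sup (f := fun i => C.a f i) (Finset.mem_univ i))
          (Finset.le_sup (f := fun f => Finset.univ.sup fun i => C.a f i) (Finset.mem_univ f)))))
    exact_mod_cast this
  have hbK : ∀ f i, (C.b f i : ℝ) ≤ K := by
    intro f i
    have : C.b f i ≤ K := by
      rw [hK]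
      exact le_sup_of_le_left (le_sup_of_le_left (le_sup_of_le_right
        (le_trans (Finset.le_sup (f := fun i => C.b f i) (Finset.mem_univ i))
          (Finset.le_sup (f := fun f => Finset.univ.sup fun i => C.b f i) (Finset.mem_univ f)))))
    exact_mod_cast this
  have hcK : ∀ f, (C.c f : ℝ) ≤ K := by
    intro f
    have : C.c f ≤ K := by
      rw [hK]
      exact le_sup_of_le_left (le_sup_of_le_right (Finset.le_sup (Finset.mem_univ f)))
    exact_mod_cast this
  have hdK : ∀ f, (C.d f : ℝ) ≤ K := by
    intro f
    have : C.d f ≤ K := by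
      rw [hK]
      exact le_sup_of_le_right (Finset.le_sup (Finset.mem_univ f))
    exact_mod_cast this
  intro t
  induction t with
  | var x => exact x.elim
  | fn f ts ih =>
    intro Δ hΔ
    have hden : ∀ i, (0:ℝ) < (C.a f i : ℝ) + (C.b f i : ℝ) * Δ := by
      intro i
      have hp := C.pos f i
      rcases Nat.eq_zero_or_pos (C.a f i) with h0 | h0
      · have hb : (1:ℝ) ≤ (C.b f i : ℝ) := by exact_mod_cast (by omega : 1 ≤ C.b f i)
        rw [h0]
        push_cast
        nlinarith
      · have ha1 : (1:ℝ) ≤ (C.a f i : ℝ) := by exact_mod_cast h0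
        nlinarith [mul_nonneg (Nat.cast_nonneg (C.b f i) : (0:ℝ) ≤ _) hΔ.le]
    have hx2 : (2:ℝ) ≤ (K:ℝ) + 2 := by linarith
    have key : ∀ i, ((C.a f i : ℝ) + (C.b f i : ℝ) * Δ) * C.evalG (ts i) (C.par f i Δ)
        ≤ ((K:ℝ)+1) * (((K:ℝ)+2) ^ (ts i).size) * (Δ + 1) := by
      intro i
      have hpar : 0 < C.par f i Δ := div_pos hΔ (hden i)
      have hih := ih i _ hpar
      have hnn : (0:ℝ) ≤ (C.a f i : ℝ) + (C.b f i : ℝ) * Δ := (hden i).le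
      have heq : ((C.a f i : ℝ) + (C.b f i : ℝ) * Δ) * (C.par f i Δ + 1)
          = Δ + ((C.a f i : ℝ) + (C.b f i : ℝ) * Δ) := by
        unfold DeltaLin.par
        rw [mul_add, mul_one, mul_div_cancel₀ _ (hden i).ne']
      have hpow : (0:ℝ) ≤ ((K:ℝ)+2) ^ (ts i).size := by positivity
      have step2 : Δ + ((C.a f i : ℝ) + (C.b f i : ℝ) * Δ) ≤ ((K:ℝ)+1) * (Δ + 1) := by
        nlinarith [haK f i, hbK f i, hΔ.le]
      calc ((C.a f i : ℝ) + (C.b f i : ℝ) * Δ) * C.evalG (ts i) (C.par f i Δ)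
          ≤ ((C.a f i : ℝ) + (C.b f i : ℝ) * Δ) * (((K:ℝ)+2) ^ (ts i).size * (C.par f i Δ + 1)) :=
            mul_le_mul_of_nonneg_left hih hnn
        _ = ((K:ℝ)+2) ^ (ts i).size * (((C.a f i : ℝ) + (C.b f i : ℝ) * Δ) * (C.par f i Δ + 1)) := by
            ring
        _ = ((K:ℝ)+2) ^ (ts i).size * (Δ + ((C.a f i : ℝ) + (C.b f i : ℝ) * Δ)) := by rw [heq]
        _ ≤ ((K:ℝ)+2) ^ (ts i).size * (((K:ℝ)+1) * (Δ + 1)) := mul_le_mul_of_nonneg_left step2 hpow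
        _ = ((K:ℝ)+1) * (((K:ℝ)+2) ^ (ts i).size) * (Δ + 1) := by ring
    set S : ℕ := ∑ i, (ts i).size with hS
    set T : ℝ := ∑ i, (((K:ℝ)+2) ^ (ts i).size) with hT'
    have hT : T ≤ ((K:ℝ)+2) ^ S :=
      sum_pow_le _ _ hx2 _ (fun i => size_pos' (ts i))
    have hTnn : (0:ℝ) ≤ T := Finset.sum_nonneg (fun i _ => by positivity)
    have hsum : C.evalG (Tm.fn f ts) Δ
        = (∑ i, ((C.a f i : ℝ) + (C.b f i : ℝ) * Δ) * C.evalG (ts i) (C.par f i Δ))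
          + (C.c f : ℝ) * Δ + (C.d f : ℝ) := by
      show C.fA f Δ _ = _
      unfold DeltaLin.fA
      rw [← Finset.sum_add_distrib]
      congr 2
      apply Finset.sum_congr rfl
      intro i _
      ring
    have hbig : (∑ i, ((C.a f i : ℝ) + (C.b f i : ℝ) * Δ) * C.evalG (ts i) (C.par f i Δ))
        ≤ ((K:ℝ)+1) * T * (Δ + 1) := by
      calc (∑ i, ((C.a f i : ℝ) + (C.b f i : ℝ) * Δ) * C.evalG (ts i) (C.par f i Δ))
          ≤ ∑ i, ((K:ℝ)+1) * (((K:ℝ)+2) ^ (ts i).size) * (Δ + 1) :=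
            Finset.sum_le_sum (fun i _ => key i)
        _ = ((K:ℝ)+1) * T * (Δ + 1) := by
            rw [hT', Finset.mul_sum, Finset.sum_mul]
    have hcoef : ((K:ℝ)+1) * T + (K:ℝ) ≤ ((K:ℝ)+2) ^ (1 + S) := by
      rcases Nat.eq_zero_or_pos (ar f) with h0 | h0
      · have hTe : T = 0 := by
          rw [hT']
          apply Finset.sum_eq_zero
          intro i _
          exact absurd i.2 (by omega)
        have hSe : S = 0 := by
          rw [hS]
          apply Finset.sum_eq_zero
          intro i _
          exact absurd i.2 (by omega)
        rw [hTe, hSe]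
        norm_num
      · have hS1 : 1 ≤ S := by
          have i0 : Fin (ar f) := ⟨0, h0⟩
          calc 1 ≤ (ts i0).size := size_pos' _
          _ ≤ S := Finset.single_le_sum (f := fun i => (ts i).size)
              (fun i _ => Nat.zero_le _) (Finset.mem_univ i0)
        have hKS : (K:ℝ) + 2 ≤ ((K:ℝ)+2) ^ S := by
          calc (K:ℝ) + 2 = ((K:ℝ)+2) ^ 1 := (pow_one _).symm
          _ ≤ ((K:ℝ)+2) ^ S := pow_le_pow_right₀ (by linarith) hS1
        have : ((K:ℝ)+2) ^ (1 + S) = ((K:ℝ)+2) * ((K:ℝ)+2) ^ S := by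
          rw [pow_add, pow_one]
        rw [this]
        nlinarith
    have hsz : Tm.size (Tm.fn f ts) = 1 + S := by simp [Tm.size, hS]
    rw [hsum, hsz]
    have hcd : (C.c f : ℝ) * Δ + (C.d f : ℝ) ≤ (K:ℝ) * (Δ + 1) := by
      nlinarith [hcK f, hdK f, hΔ.le, (Nat.cast_nonneg (C.c f) : (0:ℝ) ≤ _), (Nat.cast_nonneg (C.d f) : (0:ℝ) ≤ _)]
    have hfin : ((K:ℝ)+1) * T * (Δ + 1) + (K:ℝ) * (Δ + 1)
        ≤ ((K:ℝ)+2) ^ (1 + S) * (Δ + 1) := by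
      have := mul_le_mul_of_nonneg_right hcoef (by linarith : (0:ℝ) ≤ Δ + 1)
      nlinarith
    linarith
end

section
/- Let R be a TRS over a finite signature F that is compatible with some Δ-linear interpretation. Then R is terminating, and there exists c ∈ ℕ such that for every term t ∈ T(F,V), every →_R-derivation starting from t has length at most 2^{c·|t|}. -/
namespace Tm

variable {F : Type} {ar : F → ℕ} {V : Type}

/-- Application of a substitution to a term. -/
def subst (σ : V → Tm F ar V) : Tm F ar V → Tm F ar V
  | var x => σ x
  | fn f ts => fn f fun i => (ts i).subst σ

end Tm

/-- `R` is a term rewrite system: left-hand sides are not variables and every variable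
of a right-hand side occurs in the corresponding left-hand side. -/
def IsTRS {F : Type} {ar : F → ℕ} (R : Set (Tm F ar ℕ × Tm F ar ℕ)) : Prop :=
  ∀ p ∈ R, (∀ x : ℕ, p.1 ≠ Tm.var x) ∧
    ∀ x : ℕ, 0 < Tm.count x p.2 → 0 < Tm.count x p.1

/-- The rewrite relation of `R`: the closure of the rules under contexts and
substitutions. -/
inductive Rew {F : Type} {ar : F → ℕ} (R : Set (Tm F ar ℕ × Tm F ar ℕ)) :
    Tm F ar ℕ → Tm F ar ℕ → Prop
  | rule {l r} (σ : ℕ → Tm F ar ℕ) : (l, r) ∈ R → Rew R (l.subst σ) (r.subst σ)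
  | congr {f} {ts : Fin (ar f) → Tm F ar ℕ} (i) {t'} :
      Rew R (ts i) t' → Rew R (.fn f ts) (.fn f (Function.update ts i t'))

/-- A `ρ`-derivation of length `n`: `d 0 → d 1 → ⋯ → d n`. -/
def ChainOf {A : Type} (ρ : A → A → Prop) (n : ℕ) (d : ℕ → A) : Prop :=
  ∀ i < n, ρ (d i) (d (i + 1))

namespace DeltaLin

variable {F : Type} {ar : F → ℕ}

/-- Evaluation of a term under a Δ-assignment `α` (mapping each `Δ` and each variable
to a real): `[α,Δ](x) = α(Δ,x)` and
`[α,Δ](f(t₁,…,tₙ)) = f[Δ]([α,f¹(Δ)](t₁),…,[α,fⁿ(Δ)](tₙ))`. -/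
noncomputable def evalA (C : DeltaLin F ar) (α : ℝ → ℕ → ℝ) : Tm F ar ℕ → ℝ → ℝ
  | .var x, Δ => α Δ x
  | .fn f ts, Δ => C.fA f Δ fun i => evalA C α (ts i) (C.par f i Δ)

/-- Compatibility of the interpretation with a TRS `R`:
`[α,Δ](l) − [α,Δ](r) ≥ Δ` for every rule `l → r ∈ R`, every `Δ > 0` and every
Δ-assignment `α` with nonnegative values. -/
def Compat (C : DeltaLin F ar) (R : Set (Tm F ar ℕ × Tm F ar ℕ)) : Prop :=
  ∀ p ∈ R, ∀ Δ : ℝ, 0 < Δ → ∀ α : ℝ → ℕ → ℝ, (∀ Δ' x, 0 ≤ α Δ' x) →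
    Δ ≤ C.evalA α p.1 Δ - C.evalA α p.2 Δ

end DeltaLin

namespace DeltaLin

variable {F : Type} {ar : F → ℕ} (C : DeltaLin F ar)

lemma denom_pos {f : F} {i : Fin (ar f)} {Δ : ℝ} (hΔ : 0 < Δ) :
    0 < (C.a f i : ℝ) + (C.b f i : ℝ) * Δ := by
  rcases Nat.eq_zero_or_pos (C.a f i) with h | h
  · have hb : 1 ≤ C.b f i := by have := C.pos f i; omega
    have hb' : (1:ℝ) ≤ (C.b f i : ℝ) := by exact_mod_cast hb
    have : (C.a f i : ℝ) = 0 := by exact_mod_cast h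
    nlinarith
  · have ha : (1:ℝ) ≤ (C.a f i : ℝ) := by exact_mod_cast h
    nlinarith [mul_nonneg (Nat.cast_nonneg (C.b f i) : (0:ℝ) ≤ (C.b f i : ℝ)) hΔ.le]

lemma par_pos {f : F} {i : Fin (ar f)} {Δ : ℝ} (hΔ : 0 < Δ) : 0 < C.par f i Δ :=
  div_pos hΔ (C.denom_pos hΔ)

lemma par_nonneg {f : F} {i : Fin (ar f)} {Δ : ℝ} (hΔ : 0 ≤ Δ) : 0 ≤ C.par f i Δ :=
  div_nonneg hΔ (add_nonneg (Nat.cast_nonneg _) (mul_nonneg (Nat.cast_nonneg _) hΔ))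

lemma par_le_one {f : F} {i : Fin (ar f)} {Δ : ℝ} (h0 : 0 ≤ Δ) (h1 : Δ ≤ 1) :
    C.par f i Δ ≤ 1 := by
  rcases h0.eq_or_lt with rfl | hΔ
  · simp [par]
  · rw [par, div_le_one (C.denom_pos hΔ)]
    rcases Nat.eq_zero_or_pos (C.a f i) with h | h
    · have hb : 1 ≤ C.b f i := by have := C.pos f i; omega
      have hb' : (1:ℝ) ≤ (C.b f i : ℝ) := by exact_mod_cast hb
      nlinarith
    · have ha : (1:ℝ) ≤ (C.a f i : ℝ) := by exact_mod_cast h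
      nlinarith [mul_nonneg (Nat.cast_nonneg (C.b f i) : (0:ℝ) ≤ (C.b f i : ℝ)) hΔ.le]

lemma mul_par {f : F} {i : Fin (ar f)} {Δ : ℝ} (hΔ : 0 < Δ) :
    ((C.a f i : ℝ) + (C.b f i : ℝ) * Δ) * C.par f i Δ = Δ := by
  rw [par, mul_div_cancel₀ _ (C.denom_pos hΔ).ne']

lemma evalA_nonneg (α : ℝ → ℕ → ℝ) (hα : ∀ Δ' x, 0 ≤ α Δ' x) :
    ∀ (t : Tm F ar ℕ) {Δ : ℝ}, 0 ≤ Δ → 0 ≤ C.evalA α t Δ := by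
  intro t
  induction t with
  | var x => intro Δ h; simpa [evalA] using hα Δ x
  | fn f ts ih =>
    intro Δ hΔ
    simp only [evalA, fA]
    have hz : ∀ i, 0 ≤ C.evalA α (ts i) (C.par f i Δ) :=
      fun i => ih i (C.par_nonneg hΔ)
    refine add_nonneg (add_nonneg (add_nonneg ?_ ?_) ?_) ?_
    · exact Finset.sum_nonneg fun i _ => mul_nonneg (Nat.cast_nonneg _) (hz i)
    · exact Finset.sum_nonneg fun i _ =>
        mul_nonneg (mul_nonneg (Nat.cast_nonneg _) (hz i)) hΔ
    · exact mul_nonneg (Nat.cast_nonneg _) hΔ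
    · exact Nat.cast_nonneg _

lemma evalA_congr {α₁ α₂ : ℝ → ℕ → ℝ}
    (h : ∀ Δ' x, 0 ≤ Δ' → α₁ Δ' x = α₂ Δ' x) :
    ∀ (t : Tm F ar ℕ) {Δ : ℝ}, 0 ≤ Δ → C.evalA α₁ t Δ = C.evalA α₂ t Δ := by
  intro t
  induction t with
  | var x => intro Δ hΔ; simpa [evalA] using h Δ x hΔ
  | fn f ts ih =>
    intro Δ hΔ
    simp only [evalA]
    have : (fun i => C.evalA α₁ (ts i) (C.par f i Δ))
        = fun i => C.evalA α₂ (ts i) (C.par f i Δ) :=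
      funext fun i => ih i (C.par_nonneg hΔ)
    rw [this]

lemma evalA_subst (α : ℝ → ℕ → ℝ) (σ : ℕ → Tm F ar ℕ) :
    ∀ (t : Tm F ar ℕ) (Δ : ℝ),
      C.evalA α (t.subst σ) Δ = C.evalA (fun Δ' x => C.evalA α (σ x) Δ') t Δ := by
  intro t
  induction t with
  | var x => intro Δ; simp [Tm.subst, evalA]
  | fn f ts ih =>
    intro Δ
    simp only [Tm.subst, evalA]
    congr 1
    funext i
    exact ih i _

lemma fA_update (f : F) (Δ : ℝ) (z : Fin (ar f) → ℝ) (i : Fin (ar f)) (w : ℝ) :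
    C.fA f Δ (Function.update z i w) =
      C.fA f Δ z + ((C.a f i : ℝ) + (C.b f i : ℝ) * Δ) * (w - z i) := by
  have key : ∀ (g : Fin (ar f) → ℝ),
      (∑ j, g j * Function.update z i w j) = (∑ j, g j * z j) + g i * (w - z i) := by
    intro g
    have h : ∀ j, g j * Function.update z i w j
        = g j * z j + (if j = i then g i * (w - z i) else 0) := by
      intro j
      rcases eq_or_ne j i with rfl | hj
      · simp [Function.update_apply]; ring
      · simp [Function.update_apply, hj]
    simp_rw [h, Finset.sum_add_distrib]
    rw [Finset.sum_ite_eq' Finset.univ]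
    simp
  simp only [fA]
  have hb : (∑ j, (C.b f j : ℝ) * Function.update z i w j * Δ)
      = (∑ j, (C.b f j : ℝ) * Function.update z i w j) * Δ := by
    rw [Finset.sum_mul]
  have hb' : (∑ j, (C.b f j : ℝ) * z j * Δ) = (∑ j, (C.b f j : ℝ) * z j) * Δ := by
    rw [Finset.sum_mul]
  rw [hb, hb', key, key]
  ring

lemma decrease {R : Set (Tm F ar ℕ × Tm F ar ℕ)} (hcompat : C.Compat R)
    {s t : Tm F ar ℕ} (hst : Rew R s t) :
    ∀ {Δ : ℝ}, 0 < Δ → ∀ α : ℝ → ℕ → ℝ, (∀ Δ' x, 0 ≤ α Δ' x) →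
      C.evalA α t Δ + Δ ≤ C.evalA α s Δ := by
  induction hst with
  | @rule l r σ hmem =>
    intro Δ hΔ α hα
    set β : ℝ → ℕ → ℝ := fun Δ' x => C.evalA α (σ x) (max Δ' 0) with hβdef
    have hβ : ∀ Δ' x, 0 ≤ β Δ' x :=
      fun Δ' x => C.evalA_nonneg α hα (σ x) (le_max_right _ _)
    have hagree : ∀ Δ' x, 0 ≤ Δ' → (fun Δ' x => C.evalA α (σ x) Δ') Δ' x = β Δ' x := by
      intro Δ' x h
      simp [hβdef, max_eq_left h]
    have hl : C.evalA α (l.subst σ) Δ = C.evalA β l Δ := by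
      rw [C.evalA_subst α σ l Δ, C.evalA_congr hagree l hΔ.le]
    have hr : C.evalA α (r.subst σ) Δ = C.evalA β r Δ := by
      rw [C.evalA_subst α σ r Δ, C.evalA_congr hagree r hΔ.le]
    have := hcompat (l, r) hmem Δ hΔ β hβ
    simp only at this
    rw [hl, hr]
    linarith
  | @congr f ts i t' hrew ih =>
    intro Δ hΔ α hα
    simp only [evalA]
    have hup : (fun j => C.evalA α (Function.update ts i t' j) (C.par f j Δ))
        = Function.update (fun j => C.evalA α (ts j) (C.par f j Δ)) i
            (C.evalA α t' (C.par f i Δ)) := by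
      funext j
      rcases eq_or_ne j i with rfl | hj
      · simp
      · simp [Function.update_apply, hj]
    rw [hup, C.fA_update]
    have hparpos := C.par_pos (f := f) (i := i) hΔ
    have hih := ih hparpos α hα
    have hd := C.denom_pos (f := f) (i := i) hΔ
    have hmp := C.mul_par (f := f) (i := i) hΔ
    nlinarith [mul_le_mul_of_nonneg_left
      (by linarith : C.evalA α t' (C.par f i Δ)
          - C.evalA α (ts i) (C.par f i Δ) ≤ -(C.par f i Δ)) hd.le]

lemma evalA_le_pow (K : ℕ) (hK1 : 1 ≤ K)
    (hKf : ∀ f : F, ((∑ i, (C.a f i + C.b f i)) + C.c f + C.d f) ≤ K) :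
    ∀ (t : Tm F ar ℕ) {Δ : ℝ}, 0 ≤ Δ → Δ ≤ 1 →
      C.evalA (fun _ _ => 0) t Δ ≤ (K : ℝ) ^ t.size := by
  intro t
  induction t with
  | var x =>
    intro Δ h0 h1
    simp only [evalA, Tm.size]
    positivity
  | fn f ts ih =>
    intro Δ h0 h1
    simp only [evalA, fA, Tm.size]
    set S := ∑ j, (ts j).size with hS
    have hK1' : (1:ℝ) ≤ (K:ℝ) := by exact_mod_cast hK1
    have hKS1 : (1:ℝ) ≤ (K:ℝ) ^ S := one_le_pow₀ hK1'
    set z : Fin (ar f) → ℝ := fun j => C.evalA (fun _ _ => 0) (ts j) (C.par f j Δ)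
      with hz
    have hz0 : ∀ j, 0 ≤ z j := fun j =>
      C.evalA_nonneg _ (fun _ _ => le_refl 0) (ts j) (C.par_nonneg h0)
    have hzle : ∀ j, z j ≤ (K:ℝ) ^ S := by
      intro j
      calc z j ≤ (K:ℝ) ^ (ts j).size :=
            ih j (C.par_nonneg h0) (C.par_le_one h0 h1)
        _ ≤ (K:ℝ) ^ S := by
            apply pow_le_pow_right₀ hK1'
            exact Finset.single_le_sum (f := fun k => (ts k).size) (fun k _ => Nat.zero_le _) (Finset.mem_univ j)
    have ha : (∑ j, (C.a f j : ℝ) * z j) ≤ (∑ j, (C.a f j : ℝ)) * (K:ℝ) ^ S := by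
      rw [Finset.sum_mul]
      exact Finset.sum_le_sum fun j _ =>
        mul_le_mul_of_nonneg_left (hzle j) (Nat.cast_nonneg _)
    have hbb : (∑ j, (C.b f j : ℝ) * z j * Δ) ≤ (∑ j, (C.b f j : ℝ)) * (K:ℝ) ^ S := by
      rw [Finset.sum_mul]
      refine Finset.sum_le_sum fun j _ => ?_
      have : (C.b f j : ℝ) * z j * Δ ≤ (C.b f j : ℝ) * z j := by
        nlinarith [mul_nonneg (Nat.cast_nonneg (C.b f j) : (0:ℝ) ≤ _) (hz0 j)]
      calc (C.b f j : ℝ) * z j * Δ ≤ (C.b f j : ℝ) * z j := this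
        _ ≤ (C.b f j : ℝ) * (K:ℝ) ^ S :=
            mul_le_mul_of_nonneg_left (hzle j) (Nat.cast_nonneg _)
    have hcd : (C.c f : ℝ) * Δ + (C.d f : ℝ)
        ≤ ((C.c f : ℝ) + (C.d f : ℝ)) * (K:ℝ) ^ S := by
      nlinarith [(Nat.cast_nonneg (C.c f) : (0:ℝ) ≤ _), (Nat.cast_nonneg (C.d f) : (0:ℝ) ≤ _)]
    have hsum : ((∑ j, (C.a f j : ℝ)) + (∑ j, (C.b f j : ℝ))
        + (C.c f : ℝ) + (C.d f : ℝ)) ≤ (K:ℝ) := by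
      have h := hKf f
      have h' : (((∑ i, (C.a f i + C.b f i)) + C.c f + C.d f : ℕ) : ℝ) ≤ (K:ℝ) := by
        exact_mod_cast h
      push_cast [Finset.sum_add_distrib] at h'
      linarith
    have hpow : (K:ℝ) ^ (1 + S) = (K:ℝ) * (K:ℝ) ^ S := by
      rw [pow_add, pow_one]
    rw [hpow]
    nlinarith [mul_le_mul_of_nonneg_right hsum (by linarith : (0:ℝ) ≤ (K:ℝ) ^ S)]

end DeltaLin


/-- If a TRS `R` over a finite signature is compatible with a
Δ-linear interpretation, then `R` is terminating and there is a constant `c ∈ ℕ` such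
that every `→_R`-derivation starting from a term `t` has length at most `2^{c·|t|}`. -/
theorem deltaLin_exponential {F : Type} [Finite F] {ar : F → ℕ}
    (R : Set (Tm F ar ℕ × Tm F ar ℕ)) (hTRS : IsTRS R)
    (C : DeltaLin F ar) (hcompat : C.Compat R) :
    (¬ ∃ d : ℕ → Tm F ar ℕ, ∀ i, Rew R (d i) (d (i + 1))) ∧
    ∃ c : ℕ, ∀ (t : Tm F ar ℕ) (m : ℕ) (d : ℕ → Tm F ar ℕ),
      d 0 = t → ChainOf (Rew R) m d → m ≤ 2 ^ (c * Tm.size t) := by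
  classical
  set α0 : ℝ → ℕ → ℝ := fun _ _ => 0 with hα0
  have hα0' : ∀ Δ' x, 0 ≤ α0 Δ' x := fun _ _ => le_refl 0
  have step : ∀ {s t : Tm F ar ℕ}, Rew R s t →
      C.evalA α0 t 1 + 1 ≤ C.evalA α0 s 1 :=
    fun h => C.decrease hcompat h one_pos α0 hα0'
  have chain : ∀ (m : ℕ) (d : ℕ → Tm F ar ℕ), ChainOf (Rew R) m d →
      C.evalA α0 (d m) 1 + m ≤ C.evalA α0 (d 0) 1 := by
    intro m
    induction m with
    | zero => intro d _; simp
    | succ n ihn =>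
      intro d hc
      have h1 := ihn d (fun i hi => hc i (by omega))
      have h2 := step (hc n (by omega))
      push_cast
      push_cast at h1
      linarith
  constructor
  · rintro ⟨d, hd⟩
    set N := ⌈C.evalA α0 (d 0) 1⌉₊ + 1 with hN
    have h := chain N d (fun i _ => hd i)
    have h0 := C.evalA_nonneg α0 hα0' (d N) (zero_le_one)
    have hle : (N:ℝ) ≤ C.evalA α0 (d 0) 1 := by linarith
    have : N ≤ ⌈C.evalA α0 (d 0) 1⌉₊ := by
      have := Nat.ceil_le_ceil (R := ℝ) hle
      simpa using this
    omega
  · have : Fintype F := Fintype.ofFinite F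
    set K := 2 ⊔ Finset.univ.sup
      (fun f : F => (∑ i, (C.a f i + C.b f i)) + C.c f + C.d f) with hK
    refine ⟨K, ?_⟩
    intro t m d hd0 hch
    have hK1 : 1 ≤ K := le_trans one_le_two le_sup_left
    have hKf : ∀ f : F, ((∑ i, (C.a f i + C.b f i)) + C.c f + C.d f) ≤ K :=
      fun f => le_sup_of_le_right (Finset.le_sup (f := fun f : F => (∑ i, (C.a f i + C.b f i)) + C.c f + C.d f) (Finset.mem_univ f))
    have hb := C.evalA_le_pow K hK1 hKf t (zero_le_one) (le_refl (1:ℝ))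
    have hc := chain m d hch
    have h0 := C.evalA_nonneg α0 hα0' (d m) (zero_le_one)
    rw [hd0] at hc
    have hmr : (m:ℝ) ≤ (K:ℝ) ^ t.size := by
      calc (m:ℝ) ≤ C.evalA α0 t 1 := by linarith
        _ ≤ (K:ℝ) ^ t.size := hb
    have hm : m ≤ K ^ t.size := by exact_mod_cast hmr
    calc m ≤ K ^ t.size := hm
      _ ≤ (2 ^ K) ^ t.size := Nat.pow_le_pow_left (Nat.lt_two_pow_self (n := K)).le _
      _ = 2 ^ (K * t.size) := by rw [← pow_mul]
end
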